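/- For α ∈ (0,1), the function f(λ) = λ(1−λ)/(1−αλ) on the interval [0,1) is concave. -/

import Mathlib

open Set

/-- For α ∈ (0,1), the function f(λ) = λ(1−λ)/(1−αλ) on [0,1) is concave. -/
theorem stmt_0 (α : ℝ) (hα : α ∈ Set.Ioo (0:ℝ) 1) :
    ConcaveOn ℝ (Set.Ico (0:ℝ) 1) (fun l : ℝ => l * (1 - l) / (1 - α * l)) := by
  obtain ⟨hα0, hα1⟩ := hα
  -- convexity of x ↦ x⁻¹ on Ioi 0
  have hinv : ConvexOn ℝ (Ioi (0:ℝ)) (fun x : ℝ => x⁻¹) := by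
    have := (strictConvexOn_zpow (m := -1) (by decide) (by decide)).convexOn
    convert this using 2 with x
    case e'_12 => exact (zpow_neg_one x).symm
    all_goals rfl
  -- affine map l ↦ 1 - α l
  set A : ℝ →ᵃ[ℝ] ℝ := AffineMap.lineMap (1:ℝ) (1 - α) with hA
  have hAval : ∀ l : ℝ, A l = 1 - α * l := by
    intro l
    simp [hA, AffineMap.lineMap_apply, smul_eq_mul]
    ring
  have hsub : Ico (0:ℝ) 1 ⊆ A ⁻¹' (Ioi 0) := by
    intro l hl
    simp only [mem_preimage, mem_Ioi, hAval]
    nlinarith [hl.1, hl.2]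
  have hconv : ConvexOn ℝ (Ico (0:ℝ) 1) (fun l : ℝ => (1 - α * l)⁻¹) := by
    have h1 := (hinv.comp_affineMap A).subset hsub (convex_Ico 0 1)
    convert h1 using 2 with l
    case e'_12 => simp [hAval]
    all_goals rfl
  set c : ℝ := (1 - α) / α ^ 2 with hc
  have hc0 : 0 ≤ c := by
    apply div_nonneg (by linarith)
    positivity
  -- concave part: g l = l/α + c - c * (1 - α l)⁻¹
  have hg : ConcaveOn ℝ (Ico (0:ℝ) 1)
      (fun l : ℝ => (l / α + c) + (- (c • (1 - α * l)⁻¹))) := by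
    refine ConcaveOn.add ?_ ((hconv.smul hc0).neg)
    refine ⟨convex_Ico 0 1, fun x _ y _ a b ha hb hab => le_of_eq ?_⟩
    simp only [smul_eq_mul]
    have hα0' : α ≠ 0 := ne_of_gt hα0
    field_simp
    ring_nf
    linear_combination (c * α) * hab
  refine hg.congr ?_
  intro l hl
  have h1 : (1 : ℝ) - α * l > 0 := by nlinarith [hl.1, hl.2]
  have hα0' : α ≠ 0 := ne_of_gt hα0
  have h1' : (1 : ℝ) - l * α ≠ 0 := by nlinarith [hl.1, hl.2]
  simp only [smul_eq_mul, hc]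
  field_simp
  ring
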